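/- Let g be a complex semisimple Lie algebra with Poisson bracket [p,q](x) = (x,[dp(x),dq(x)]) on polynomial functions. If V is a finite-dimensional subspace of S(g) consisting of pairwise Poisson-commuting polynomials, then for every x in g one has dim{dp(x) : p in V} ≤ b, where b = (dim g + rank g)/2 is the dimension of a Borel subalgebra. -/

import Mathlib

open Module MvPolynomial Submodule


private lemma hasDerivAt_eval_line {n : ℕ} (P : MvPolynomial (Fin n) ℂ) (c z : Fin n → ℂ) :
    HasDerivAt (fun t : ℂ => MvPolynomial.eval (fun i => c i + t * z i) P)
      (MvPolynomial.eval c (∑ i, z i • MvPolynomial.pderiv i P)) 0 := by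
  induction P using MvPolynomial.induction_on with
  | C a => simpa using hasDerivAt_const (0:ℂ) a
  | add p q hp hq =>
      have h := hp.add hq
      convert h using 1
      case e'_8 => funext t; simp
      case e'_9 => simp [map_add, smul_add, Finset.sum_add_distrib]
      all_goals rfl
  | mul_X p j hp =>
      have h2 : HasDerivAt (fun t : ℂ => c j + t * z j) (z j) 0 := by
        simpa using ((hasDerivAt_id (0:ℂ)).mul_const (z j)).const_add (c j)
      have h := hp.mul h2
      convert h using 1
      case e'_8 => funext t; simp
      case e'_9 =>
        simp only [map_mul, eval_X, Derivation.leibniz, pderiv_X, smul_add, Finset.sum_add_distrib,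
          map_add, smul_eq_mul]
        simp only [map_sum, smul_eval, map_mul, eval_X, Pi.single_apply, mul_ite, mul_one,
          mul_zero, Finset.sum_ite_eq', Finset.mem_univ, if_true, Finset.mul_sum, Finset.sum_mul]
        simp only [apply_ite (MvPolynomial.eval c), map_zero, mul_ite, mul_zero,
          Finset.sum_ite_eq, Finset.mem_univ, if_true, zero_mul, add_zero]
        have hcomm : ∀ i : Fin n, z i * (c j * (MvPolynomial.eval c) ((MvPolynomial.pderiv i) p))
            = z i * (MvPolynomial.eval c) ((MvPolynomial.pderiv i) p) * c j := fun i => by ring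
        rw [Finset.sum_congr rfl (fun i _ => hcomm i)]
        ring
      all_goals rfl


private lemma isotropic_bound {g : Type*} [AddCommGroup g] [Module ℂ g] [FiniteDimensional ℂ g]
    (B : g →ₗ[ℂ] g →ₗ[ℂ] ℂ) (W : Submodule ℂ g)
    (h : ∀ w ∈ W, ∀ w' ∈ W, B w w' = 0) :
    2 * finrank ℂ W ≤ finrank ℂ g + finrank ℂ (LinearMap.ker B) := by
  set Bw : W →ₗ[ℂ] (g →ₗ[ℂ] ℂ) := B.domRestrict W with hBw
  have hrange : LinearMap.range Bw ≤ W.dualAnnihilator := by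
    rintro - ⟨w, rfl⟩
    rw [Submodule.mem_dualAnnihilator]
    intro w' hw'
    exact h w w.2 w' hw'
  have hker : finrank ℂ (LinearMap.ker Bw) ≤ finrank ℂ (LinearMap.ker B) := by
    have he : LinearMap.ker Bw = (LinearMap.ker B).comap W.subtype := by
      ext w; simp [hBw, LinearMap.mem_ker]
    rw [he]
    have e1 := Submodule.equivMapOfInjective W.subtype W.injective_subtype
      ((LinearMap.ker B).comap W.subtype)
    rw [e1.finrank_eq]
    exact Submodule.finrank_mono (Submodule.map_comap_le _ _)
  have hrk := LinearMap.finrank_range_add_finrank_ker Bw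
  have hann : finrank ℂ W.dualAnnihilator + finrank ℂ W = finrank ℂ g := by
    rw [← (Subspace.quotEquivAnnihilator W).finrank_eq]
    exact Submodule.finrank_quotient_add_finrank W
  have h1 : finrank ℂ (LinearMap.range Bw) ≤ finrank ℂ W.dualAnnihilator :=
    Submodule.finrank_mono hrange
  omega


private lemma exists_rows_det_ne_zero {d r : ℕ} (A : Matrix (Fin d) (Fin r) ℂ)
    (h : LinearIndependent ℂ (fun k : Fin r => (fun j : Fin d => A j k))) :
    ∃ ρ : Fin r → Fin d, (Matrix.of fun j k => A (ρ j) k).det ≠ 0 := by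
  classical
  -- rows span everything
  have hspan : span ℂ (Set.range (fun j : Fin d => A j)) = ⊤ := by
    by_contra hne
    obtain ⟨f, hf0, hf⟩ := Submodule.exists_dual_map_eq_bot_of_lt_top
      (lt_top_iff_ne_top.2 hne) inferInstance
    set c : Fin r → ℂ := fun k => f (Pi.single k 1) with hc
    have hfv : ∀ v : Fin r → ℂ, f v = ∑ k, v k * c k := by
      intro v
      have hv : ∑ k, v k • (Pi.single k 1 : Fin r → ℂ) = v := by
        conv_rhs => rw [← Finset.univ_sum_single v]
        refine Finset.sum_congr rfl fun k _ => ?_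
        rw [← Pi.single_smul, smul_eq_mul, mul_one]
      conv_lhs => rw [← hv]
      rw [map_sum]
      exact Finset.sum_congr rfl fun k _ => by rw [map_smul, smul_eq_mul]
    have hcz : ∀ j, ∑ k, A j k * c k = 0 := by
      intro j
      have hmem : A j ∈ span ℂ (Set.range (fun j : Fin d => A j)) :=
        subset_span ⟨j, rfl⟩
      have hfA : f (A j) = 0 := by
        have := hf ▸ Submodule.mem_map_of_mem (f := f) hmem
        simpa using this
      rw [← hfv (A j)]; exact hfA
    have hc0 : c = 0 := by
      rw [Fintype.linearIndependent_iff] at h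
      refine funext (h c ?_)
      funext j
      simpa [Finset.sum_apply, mul_comm] using hcz j
    apply hf0
    refine LinearMap.ext fun v => ?_
    rw [hfv v, hc0]
    simp
  -- extract a basis from the rows
  obtain ⟨t, hts, htspan, htind⟩ := exists_linearIndependent ℂ (Set.range (fun j : Fin d => A j))
  rw [hspan] at htspan
  have htfin : t.Finite := htind.setFinite
  have : Fintype t := htfin.fintype
  have h1 : finrank ℂ (span ℂ t) = t.toFinset.card := finrank_span_set_eq_card htind
  rw [htspan, finrank_top, Module.finrank_fin_fun] at h1
  have hcard : Fintype.card t = r := by rw [← Set.toFinset_card]; omega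
  let e : Fin r ≃ t := (Fintype.equivFinOfCardEq hcard).symm
  have hρex : ∀ i : Fin r, ∃ j : Fin d, A j = (e i : Fin r → ℂ) := by
    intro i
    obtain ⟨j, hj⟩ := hts (e i).2
    exact ⟨j, hj⟩
  choose ρ hρ' using hρex
  refine ⟨ρ, ?_⟩
  have hrows : LinearIndependent ℂ (fun i : Fin r => A (ρ i)) := by
    have h2 : LinearIndependent ℂ (fun i : Fin r => ((e i : Fin r → ℂ))) :=
      htind.comp e e.injective
    simpa only [hρ'] using h2
  have hunit : IsUnit (Matrix.of fun j k => A (ρ j) k) :=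
    Matrix.linearIndependent_rows_iff_isUnit.1 hrows
  intro hdet
  exact (Matrix.isUnit_iff_isUnit_det _ |>.1 hunit).ne_zero hdet


set_option maxHeartbeats 1000000 in
/-- If `V` is a finite-dimensional subspace of polynomial functions on a complex
semisimple Lie algebra `g` consisting of pairwise Poisson-commuting polynomials, then for
every `x : g` the gradient space `{dp(x) : p ∈ V}` has dimension at most
`b = (dim g + rank g)/2`, the dimension of a Borel subalgebra.  (Stated as
`2 * dim {dp(x) : p ∈ V} ≤ dim g + rank g`.) -/
theorem poisson_commutative_gradient_space_le_borel_dim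
    (g : Type*) [LieRing g] [LieAlgebra ℂ g] [Module.Finite ℂ g]
    [LieAlgebra.IsKilling ℂ g] [LieAlgebra.IsSemisimple ℂ g]
    (V : Submodule ℂ (g → ℂ)) (hV : FiniteDimensional ℂ V)
    (D : (g → ℂ) → g → g)
    -- every element of `V` is a polynomial function on `g`
    (hpoly : ∀ p ∈ V, ∃ (n : ℕ) (bV : Basis (Fin n) ℂ g) (P : MvPolynomial (Fin n) ℂ),
      ∀ x : g, p x = MvPolynomial.eval (fun i => bV.repr x i) P)
    -- `D p x` is the Killing-form gradient of `p` at `x`, for `p ∈ V`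
    (hgrad : ∀ p ∈ V, ∀ x z : g,
      HasDerivAt (fun t : ℂ => p (x + t • z)) (killingForm ℂ g (D p x) z) 0)
    -- the elements of `V` pairwise Poisson commute
    (hcomm : ∀ p ∈ V, ∀ q ∈ V, ∀ x : g, killingForm ℂ g x ⁅D p x, D q x⁆ = 0)
    (x : g) :
    2 * Module.finrank ℂ (Submodule.span ℂ {y : g | ∃ p ∈ V, y = D p x})
      ≤ Module.finrank ℂ g + LieAlgebra.rank ℂ g := by
  classical
  let b : Basis (Fin (finrank ℂ g)) ℂ g := Module.finBasis ℂ g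
  -- uniqueness of Killing-gradients
  have huniq : ∀ y y' : g, (∀ z, killingForm ℂ g y z = killingForm ℂ g y' z) → y = y' := by
    intro y y' hyz
    have h0 : ∀ z, killingForm ℂ g (y - y') z = 0 := by
      intro z
      rw [map_sub, LinearMap.sub_apply, hyz z, sub_self]
    exact sub_eq_zero.1 ((LieAlgebra.IsKilling.killingForm_nondegenerate ℂ g).1 _ h0)
  -- linearity of the gradient in `p`
  have hD0 : ∀ x' : g, D 0 x' = 0 := by
    intro x'
    refine huniq _ _ fun z => ?_
    have h1 := hgrad 0 (zero_mem V) x' z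
    have h2 : HasDerivAt (fun _ : ℂ => (0:ℂ)) 0 0 := hasDerivAt_const 0 0
    have h3 := h1.unique h2
    rw [h3]; simp
  have hD_add : ∀ p ∈ V, ∀ p' ∈ V, ∀ x' : g, D (p + p') x' = D p x' + D p' x' := by
    intro p hp p' hp' x'
    refine huniq _ _ fun z => ?_
    have h3 := (hgrad _ (V.add_mem hp hp') x' z).unique ((hgrad p hp x' z).add (hgrad p' hp' x' z))
    rw [h3]; simp
  have hD_smul : ∀ p ∈ V, ∀ (c : ℂ), ∀ x' : g, D (c • p) x' = c • D p x' := by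
    intro p hp c x'
    refine huniq _ _ fun z => ?_
    have h3 := (hgrad _ (V.smul_mem c hp) x' z).unique ((hgrad p hp x' z).const_smul c)
    rw [h3]; simp
  -- the set of gradients at any point is a submodule
  have hsub : ∀ x' : g, ∃ S : Submodule ℂ g, (S : Set g) = {y : g | ∃ p ∈ V, y = D p x'} := by
    intro x'
    refine ⟨{ carrier := {y : g | ∃ p ∈ V, y = D p x'}
            , add_mem' := ?_
            , zero_mem' := ⟨0, V.zero_mem, (hD0 x').symm⟩
            , smul_mem' := ?_ }, rfl⟩
    · rintro y y' ⟨p, hp, rfl⟩ ⟨p', hp', rfl⟩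
      exact ⟨p + p', V.add_mem hp hp', (hD_add p hp p' hp' x').symm⟩
    · rintro c y ⟨p, hp, rfl⟩
      exact ⟨c • p, V.smul_mem c hp, (hD_smul p hp c x').symm⟩
  -- pairing of gradients with any fixed vector is polynomial in the base point
  have hA : ∀ p ∈ V, ∀ z : g, ∃ Q : MvPolynomial (Fin (finrank ℂ g)) ℂ,
      ∀ x' : g, killingForm ℂ g (D p x') z = MvPolynomial.eval (b.equivFun x') Q := by
    intro p hp z
    obtain ⟨n, bV, P, hP⟩ := hpoly p hp
    set L : Fin n → MvPolynomial (Fin (finrank ℂ g)) ℂ :=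
      fun i => ∑ j, MvPolynomial.C (bV.repr (b j) i) * MvPolynomial.X j with hL
    set R0 : MvPolynomial (Fin n) ℂ := ∑ i, (bV.repr z i) • MvPolynomial.pderiv i P with hR0
    refine ⟨MvPolynomial.aeval L R0, ?_⟩
    intro x'
    have h1 : HasDerivAt (fun t : ℂ => p (x' + t • z))
        (MvPolynomial.eval (fun i => bV.repr x' i) R0) 0 := by
      have h2 := hasDerivAt_eval_line P (fun i => bV.repr x' i) (fun i => bV.repr z i)
      have h3 : (fun t : ℂ => p (x' + t • z))
          = fun t : ℂ => MvPolynomial.eval (fun i => bV.repr x' i + t * bV.repr z i) P := by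
        funext t
        rw [hP]
        exact congrArg (fun v => MvPolynomial.eval v P) (funext fun i => by simp)
      rw [h3]; exact h2
    have h4 := (hgrad p hp x' z).unique h1
    rw [h4]
    have he : ∀ (v : Fin (finrank ℂ g) → ℂ) (q : MvPolynomial (Fin (finrank ℂ g)) ℂ),
        MvPolynomial.eval v q = MvPolynomial.aeval v q := fun v q => by
      rw [← MvPolynomial.coe_aeval_eq_eval]; rfl
    have he' : ∀ (v : Fin n → ℂ) (q : MvPolynomial (Fin n) ℂ),
        MvPolynomial.eval v q = MvPolynomial.aeval v q := fun v q => by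
      rw [← MvPolynomial.coe_aeval_eq_eval]; rfl
    have harg : (fun i => (bV.repr x' i : ℂ))
        = fun i => MvPolynomial.aeval (b.equivFun x') (L i) := by
      funext i
      have hx'' : ∑ j, b.equivFun x' j • b j = x' := b.sum_equivFun x'
      have hstep : bV.repr x' i = ∑ j, b.equivFun x' j * bV.repr (b j) i := by
        conv_lhs => rw [← hx'']
        rw [map_sum]
        rw [Finsupp.finset_sum_apply]
        exact Finset.sum_congr rfl fun j _ => by
          rw [map_smul]; simp
      rw [hstep, hL]
      simp only [map_sum, map_mul, MvPolynomial.aeval_C, MvPolynomial.aeval_X,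
        Algebra.algebraMap_self_apply]
      exact Finset.sum_congr rfl fun j _ => by ring
    calc MvPolynomial.eval (fun i => bV.repr x' i) R0
        = MvPolynomial.aeval (fun i => bV.repr x' i) R0 := he' _ _
      _ = MvPolynomial.aeval (fun i => MvPolynomial.aeval (b.equivFun x') (L i)) R0 := by
          rw [← harg]
      _ = MvPolynomial.aeval (b.equivFun x') (MvPolynomial.aeval L R0) :=
          (MvPolynomial.comp_aeval_apply (f := L)
            (MvPolynomial.aeval (b.equivFun x') : MvPolynomial (Fin (finrank ℂ g)) ℂ →ₐ[ℂ] ℂ)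
            R0).symm
      _ = MvPolynomial.eval (b.equivFun x') (MvPolynomial.aeval L R0) := (he _ _).symm
  -- coordinates of gradients are polynomial in the base point
  have hB : ∀ p ∈ V, ∀ j : Fin (finrank ℂ g), ∃ Q : MvPolynomial (Fin (finrank ℂ g)) ℂ,
      ∀ x' : g, b.repr (D p x') j = MvPolynomial.eval (b.equivFun x') Q := by
    intro p hp j
    have hflip : (killingForm ℂ g).flip = killingForm ℂ g := LieModule.traceForm_flip ℂ g g
    have hinj : Function.Injective (killingForm ℂ g).flip := by
      rw [← LinearMap.ker_eq_bot]
      rw [LinearMap.ker_eq_bot']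
      intro y hy
      refine (LieAlgebra.IsKilling.killingForm_nondegenerate ℂ g).1 y fun z => ?_
      have h9 := LinearMap.congr_fun hy z
      exact (LieModule.traceForm_comm ℂ g g y z).trans h9
    let e : g ≃ₗ[ℂ] Module.Dual ℂ g :=
      LinearMap.linearEquivOfInjective (killingForm ℂ g).flip hinj
        (Subspace.dual_finrank_eq (K := ℂ) (V := g)).symm
    let u : g := e.symm (b.coord j)
    have hu : ∀ y : g, killingForm ℂ g y u = b.repr y j := by
      intro y
      have h1 : (killingForm ℂ g).flip u = b.coord j := e.apply_symm_apply (b.coord j)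
      have h2 := LinearMap.congr_fun h1 y
      rw [Basis.coord_apply] at h2
      exact h2
    obtain ⟨Q, hQ⟩ := hA p hp u
    exact ⟨Q, fun x' => by rw [← hQ x', hu]⟩
  -- now the main argument
  obtain ⟨S, hS⟩ := hsub x
  have hspanS : Submodule.span ℂ {y : g | ∃ p ∈ V, y = D p x} = S := by
    rw [← hS, Submodule.span_eq]
  rw [hspanS]
  -- a basis of S realized by gradients
  let w : Basis (Fin (finrank ℂ S)) ℂ S := Module.finBasis ℂ S
  have hwmem : ∀ k, ((w k : g)) ∈ {y : g | ∃ p ∈ V, y = D p x} := fun k => by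
    rw [← hS]; exact (w k).2
  choose q hqV hqD using hwmem
  have hwind : LinearIndependent ℂ (fun k => ((w k : g))) :=
    w.linearIndependent.map' S.subtype S.ker_subtype
  -- choose polynomials for all coordinates of the gradients
  have hQex : ∀ k : Fin (finrank ℂ S), ∀ j : Fin (finrank ℂ g),
      ∃ Q : MvPolynomial (Fin (finrank ℂ g)) ℂ,
      ∀ x' : g, b.repr (D (q k) x') j = MvPolynomial.eval (b.equivFun x') Q :=
    fun k j => hB (q k) (hqV k) j
  choose Qm hQm using hQex
  -- the columns at `x` are linearly independent
  have hcols : LinearIndependent ℂ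
      (fun k : Fin (finrank ℂ S) => (fun j : Fin (finrank ℂ g) => b.repr (D (q k) x) j)) := by
    have h5 : LinearIndependent ℂ (fun k : Fin (finrank ℂ S) => b.equivFun ((w k : g))) :=
      hwind.map' b.equivFun.toLinearMap b.equivFun.ker
    have h6 : (fun k : Fin (finrank ℂ S) => (fun j => b.repr (D (q k) x) j))
        = fun k => b.equivFun ((w k : g)) := by
      funext k
      rw [← hqD k]
      rfl
    rw [h6]; exact h5
  obtain ⟨ρ, hρ⟩ := exists_rows_det_ne_zero
    (Matrix.of fun j k => b.repr (D (q k) x) j) hcols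
  -- the polynomial minor
  set F : MvPolynomial (Fin (finrank ℂ g)) ℂ :=
    (Matrix.of fun j' k => Qm k (ρ j')).det with hF
  have hFeval : ∀ x' : g, MvPolynomial.eval (b.equivFun x') F
      = (Matrix.of (fun j' k => b.repr (D (q k) x') (ρ j'))).det := by
    intro x'
    rw [hF, RingHom.map_det]
    congr 1
    funext j' k
    exact (hQm k (ρ j') x').symm
  have hF0 : F ≠ 0 := by
    intro h0
    apply hρ
    have := hFeval x
    rw [h0, map_zero] at this
    exact this.symm
  -- the regularity polynomial
  set G : MvPolynomial (Fin (finrank ℂ g)) ℂ :=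
    (LinearMap.polyCharpoly (LieAlgebra.ad ℂ g : g →ₗ[ℂ] Module.End ℂ g) b).coeff (LieAlgebra.rank ℂ g)
    with hG
  have hG0 : G ≠ 0 := LieAlgebra.polyCharpoly_coeff_rank_ne_zero ℂ g b
  have hFG : F * G ≠ 0 := mul_ne_zero hF0 hG0
  obtain ⟨v, hv⟩ : ∃ v : Fin (finrank ℂ g) → ℂ, MvPolynomial.eval v (F * G) ≠ 0 := by
    by_contra hcon
    push_neg at hcon
    exact hFG (MvPolynomial.funext fun v => by rw [hcon v, map_zero])
  set x₀ : g := b.equivFun.symm v with hx₀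
  have hvx₀ : b.equivFun x₀ = v := b.equivFun.apply_symm_apply v
  rw [map_mul] at hv
  have hFv : MvPolynomial.eval v F ≠ 0 := left_ne_zero_of_mul hv
  have hGv : MvPolynomial.eval v G ≠ 0 := right_ne_zero_of_mul hv
  -- x₀ is regular
  have hreg : LieAlgebra.IsRegular ℂ x₀ := by
    rw [LieAlgebra.isRegular_iff_coeff_polyCharpoly_rank_ne_zero ℂ b x₀]
    have hco : ⇑(b.repr x₀) = v := by
      rw [← hvx₀]; rfl
    rw [hco]
    exact hGv
  -- the gradients of the q's at x₀ are linearly independent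
  have hdet₀ : (Matrix.of (fun j' k => b.repr (D (q k) x₀) (ρ j'))).det ≠ 0 := by
    rw [← hFeval x₀, hvx₀]
    exact hFv
  have hind₀ : LinearIndependent ℂ (fun k : Fin (finrank ℂ S) => D (q k) x₀) := by
    rw [Fintype.linearIndependent_iff]
    intro c hc
    set M₀ : Matrix (Fin (finrank ℂ S)) (Fin (finrank ℂ S)) ℂ :=
      Matrix.of (fun j' k => b.repr (D (q k) x₀) (ρ j')) with hM₀
    have hmv : M₀.mulVec c = 0 := by
      funext j'
      have h7 := congrArg (fun y => b.repr y (ρ j')) hc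
      simpa [M₀, Matrix.mulVec, dotProduct, map_sum, map_smul, mul_comm,
        Finsupp.finset_sum_apply] using h7
    have hinj : Function.Injective M₀.mulVec :=
      Matrix.mulVec_injective_iff_isUnit.2
        ((Matrix.isUnit_iff_isUnit_det M₀).2 (isUnit_iff_ne_zero.2 hdet₀))
    have hc0 : c = 0 := hinj (by rw [hmv, Matrix.mulVec_zero])
    exact fun k => congrFun hc0 k
  -- the gradient space at x₀ contains an r-dimensional subspace
  obtain ⟨S₀, hS₀⟩ := hsub x₀
  have hle : Submodule.span ℂ (Set.range (fun k : Fin (finrank ℂ S) => D (q k) x₀)) ≤ S₀ := by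
    rw [Submodule.span_le]
    rintro - ⟨k, rfl⟩
    show _ ∈ (S₀ : Set g)
    rw [hS₀]
    exact ⟨q k, hqV k, rfl⟩
  have hr_le : finrank ℂ S ≤ finrank ℂ S₀ := by
    have h8 := finrank_span_eq_card hind₀
    calc finrank ℂ S
        = finrank ℂ (Submodule.span ℂ (Set.range (fun k : Fin (finrank ℂ S) => D (q k) x₀))) := by
          rw [h8, Fintype.card_fin]
      _ ≤ finrank ℂ S₀ := Submodule.finrank_mono hle
  -- the Poisson bilinear form at x₀
  let B : g →ₗ[ℂ] g →ₗ[ℂ] ℂ := LinearMap.mk₂ ℂ (fun a c' => killingForm ℂ g x₀ ⁅a, c'⁆)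
    (fun a a' c' => by simp [add_lie])
    (fun s a c' => by simp [smul_lie])
    (fun a c' c'' => by simp [lie_add])
    (fun s a c' => by simp [lie_smul])
  have hiso : ∀ w' ∈ S₀, ∀ w'' ∈ S₀, B w' w'' = 0 := by
    intro w' hw' w'' hw''
    have h1 : w' ∈ (S₀ : Set g) := hw'
    have h2 : w'' ∈ (S₀ : Set g) := hw''
    rw [hS₀] at h1 h2
    obtain ⟨p, hp, rfl⟩ := h1
    obtain ⟨p', hp', rfl⟩ := h2
    exact hcomm p hp p' hp' x₀
  have hbound := isotropic_bound B S₀ hiso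
  -- kernel of B is the centralizer of x₀
  have hkerB : LinearMap.ker B = LinearMap.ker (LieAlgebra.ad ℂ g x₀) := by
    ext a
    simp only [LinearMap.mem_ker]
    constructor
    · intro ha
      have h1 : ∀ c' : g, killingForm ℂ g ⁅x₀, a⁆ c' = 0 := by
        intro c'
        have h2 := LinearMap.congr_fun ha c'
        rw [LinearMap.zero_apply] at h2
        rw [LieModule.traceForm_apply_lie_apply]
        exact h2
      have h3 := (LieAlgebra.IsKilling.killingForm_nondegenerate ℂ g).1 _ h1
      rw [LieAlgebra.ad_apply]
      exact h3
    · intro ha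
      ext c'
      show killingForm ℂ g x₀ ⁅a, c'⁆ = 0
      rw [← LieModule.traceForm_apply_lie_apply]
      rw [← LieAlgebra.ad_apply (R := ℂ), ha]
      simp
  -- centralizer is contained in the Engel subalgebra, whose dimension is the rank
  have hker_le : finrank ℂ (LinearMap.ker (LieAlgebra.ad ℂ g x₀))
      ≤ finrank ℂ (LieSubalgebra.engel ℂ x₀) := by
    have hle' : LinearMap.ker (LieAlgebra.ad ℂ g x₀)
        ≤ ((LieSubalgebra.engel ℂ x₀) : Submodule ℂ g) := by
      intro a ha
      rw [LieSubalgebra.mem_toSubmodule, LieSubalgebra.mem_engel_iff]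
      exact ⟨1, by rw [pow_one]; exact ha⟩
    exact Submodule.finrank_mono hle'
  have hengel : finrank ℂ (LieSubalgebra.engel ℂ x₀) = LieAlgebra.rank ℂ g :=
    (LieAlgebra.isRegular_iff_finrank_engel_eq_rank ℂ x₀).1 hreg
  rw [hkerB] at hbound
  omega
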